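/- Let H(τ) be a smooth family of positive-definite symmetric r×r matrices and b₁(τ),...,b_m(τ) > 0 solving the torus-bundle backwards Ricci flow: dh_{αβ}/dτ = Σ_{α̃,β̃}Σᵢ nᵢ q_{α̃i}q_{β̃i} h_{αα̃}h_{ββ̃}/bᵢ², dbᵢ/dτ = 2pᵢ − Σ_{α̃,β̃} q_{α̃i}q_{β̃i} h_{α̃β̃}/bᵢ, with pᵢ > 0 and nᵢ ∈ ℤ_{>0}. Then: (a) bᵢ(τ) ≤ 2pᵢτ + bᵢ(0); (b) the diagonal entries of H⁻¹ are nonincreasing in τ, i.e. h^{αα}(τ) ≤ h^{αα}(0); (c) there exists c > 0 with H(τ) ≥ c·I for all τ in the existence interval. -/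

import Mathlib

open BigOperators Matrix


attribute [local instance] Matrix.linftyOpNormedAddCommGroup Matrix.linftyOpNormedSpace
  Matrix.linftyOpNormedRing Matrix.linftyOpNormedAlgebra

lemma stmt16_dot_symm {r : ℕ} (M : Matrix (Fin r) (Fin r) ℝ) (hM : ∀ i j, M i j = M j i)
    (y z : Fin r → ℝ) : z ⬝ᵥ M *ᵥ y = y ⬝ᵥ M *ᵥ z := by
  simp only [dotProduct, Matrix.mulVec, Finset.mul_sum]
  rw [Finset.sum_comm]
  exact Finset.sum_congr rfl fun a _ => Finset.sum_congr rfl fun c _ => by rw [hM c a]; ring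

lemma stmt16_cs_psd {r : ℕ} (M : Matrix (Fin r) (Fin r) ℝ) (hsymm : ∀ i j, M i j = M j i)
    (hpsd : M.PosSemidef) (y z : Fin r → ℝ) :
    (y ⬝ᵥ M *ᵥ z) ^ 2 ≤ (y ⬝ᵥ M *ᵥ y) * (z ⬝ᵥ M *ᵥ z) := by
  have key : ∀ t : ℝ, 0 ≤ (z ⬝ᵥ M *ᵥ z) * (t * t) + (2 * (y ⬝ᵥ M *ᵥ z)) * t
      + (y ⬝ᵥ M *ᵥ y) := by
    intro t
    have h0 := hpsd.dotProduct_mulVec_nonneg (y + t • z)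
    have hs : star (y + t • z) = y + t • z := by simp
    rw [hs] at h0
    have expand : (y + t • z) ⬝ᵥ M *ᵥ (y + t • z)
        = (z ⬝ᵥ M *ᵥ z) * (t * t) + (2 * (y ⬝ᵥ M *ᵥ z)) * t + (y ⬝ᵥ M *ᵥ y) := by
      rw [Matrix.mulVec_add, Matrix.mulVec_smul]
      simp only [add_dotProduct, dotProduct_add, dotProduct_smul, smul_dotProduct, smul_eq_mul]
      rw [stmt16_dot_symm M hsymm y z]
      ring
    rw [expand] at h0
    exact h0
  have hd := discrim_le_zero key
  rw [discrim] at hd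
  nlinarith [hd]

lemma stmt16_psd_diag_nonneg {r : ℕ} {M : Matrix (Fin r) (Fin r) ℝ} (hpsd : M.PosSemidef)
    (α : Fin r) : 0 ≤ M α α := by
  have := hpsd.dotProduct_mulVec_nonneg (Pi.single α 1)
  simpa [dotProduct, Matrix.mulVec, Pi.single_apply] using this

lemma stmt16_quad_le_trace {r : ℕ} (M : Matrix (Fin r) (Fin r) ℝ)
    (hsymm : ∀ i j, M i j = M j i) (hpsd : M.PosSemidef) (x : Fin r → ℝ) :
    x ⬝ᵥ M *ᵥ x ≤ (∑ α, M α α) * (∑ α, x α ^ 2) := by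
  have hdiag := fun α => stmt16_psd_diag_nonneg hpsd α
  have hentry : ∀ α β, |M α β| ≤ Real.sqrt (M α α) * Real.sqrt (M β β) := by
    intro α β
    have h1 : (Pi.single α 1 ⬝ᵥ M *ᵥ Pi.single β (1:ℝ)) = M α β := by
      simp [dotProduct, Matrix.mulVec, Pi.single_apply]
    have h3 : (Pi.single α 1 ⬝ᵥ M *ᵥ Pi.single α (1:ℝ)) = M α α := by
      simp [dotProduct, Matrix.mulVec, Pi.single_apply]
    have h4 : (Pi.single β 1 ⬝ᵥ M *ᵥ Pi.single β (1:ℝ)) = M β β := by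
      simp [dotProduct, Matrix.mulVec, Pi.single_apply]
    have h2 := stmt16_cs_psd M hsymm hpsd (Pi.single α 1) (Pi.single β 1)
    rw [h1, h3, h4] at h2
    calc |M α β| = Real.sqrt ((M α β) ^ 2) := (Real.sqrt_sq_eq_abs _).symm
      _ ≤ Real.sqrt (M α α * M β β) := Real.sqrt_le_sqrt h2
      _ = Real.sqrt (M α α) * Real.sqrt (M β β) := Real.sqrt_mul (hdiag α) _
  calc x ⬝ᵥ M *ᵥ x = ∑ α, ∑ β, x α * M α β * x β := by
        simp only [dotProduct, Matrix.mulVec, Finset.mul_sum]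
        exact Finset.sum_congr rfl fun a _ => Finset.sum_congr rfl fun c _ => by ring
    _ ≤ ∑ α, ∑ β, (Real.sqrt (M α α) * |x α|) * (Real.sqrt (M β β) * |x β|) := by
        refine Finset.sum_le_sum fun α _ => Finset.sum_le_sum fun β _ => ?_
        calc x α * M α β * x β ≤ |x α * M α β * x β| := le_abs_self _
          _ = |x α| * |M α β| * |x β| := by rw [abs_mul, abs_mul]
          _ ≤ |x α| * (Real.sqrt (M α α) * Real.sqrt (M β β)) * |x β| :=
              mul_le_mul_of_nonneg_right (mul_le_mul_of_nonneg_left (hentry α β)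
                (abs_nonneg _)) (abs_nonneg _)
          _ = (Real.sqrt (M α α) * |x α|) * (Real.sqrt (M β β) * |x β|) := by ring
    _ = (∑ α, Real.sqrt (M α α) * |x α|) ^ 2 := by rw [sq, Finset.sum_mul_sum]
    _ ≤ (∑ α, M α α) * (∑ α, x α ^ 2) := by
        calc (∑ α, Real.sqrt (M α α) * |x α|) ^ 2
            ≤ (∑ α, Real.sqrt (M α α) ^ 2) * (∑ α, |x α| ^ 2) :=
              Finset.sum_mul_sq_le_sq_mul_sq Finset.univ _ _
          _ = (∑ α, M α α) * (∑ α, x α ^ 2) := by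
              congr 1
              · exact Finset.sum_congr rfl fun α _ => Real.sq_sqrt (hdiag α)
              · exact Finset.sum_congr rfl fun α _ => sq_abs _

lemma stmt16_antitone {T : ℝ} (f f' : ℝ → ℝ)
    (hderiv : ∀ s ∈ Set.Ico (0:ℝ) T, HasDerivAt f (f' s) s)
    (hle : ∀ s ∈ Set.Ico (0:ℝ) T, f' s ≤ 0)
    {τ : ℝ} (hτ : τ ∈ Set.Ico (0:ℝ) T) : f τ ≤ f 0 := by
  obtain ⟨h0, hT'⟩ := hτ
  have sub : Set.Icc (0:ℝ) τ ⊆ Set.Ico 0 T := fun s hs => ⟨hs.1, lt_of_le_of_lt hs.2 hT'⟩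
  have hcont : ContinuousOn f (Set.Icc 0 τ) := fun s hs =>
    ((hderiv s (sub hs)).continuousAt).continuousWithinAt
  have hint : interior (Set.Icc (0:ℝ) τ) ⊆ Set.Ico 0 T := fun s hs => sub (interior_subset hs)
  have hdiff : DifferentiableOn ℝ f (interior (Set.Icc 0 τ)) := fun s hs =>
    ((hderiv s (hint hs)).differentiableAt).differentiableWithinAt
  have hmono := antitoneOn_of_deriv_nonpos (convex_Icc 0 τ) hcont hdiff fun s hs => by
    rw [(hderiv s (hint hs)).deriv]; exact hle s (hint hs)
  exact hmono (Set.left_mem_Icc.2 h0) (Set.right_mem_Icc.2 h0) h0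

lemma stmt16_inv_deriv {r : ℕ} (H : ℝ → Matrix (Fin r) (Fin r) ℝ) (τ : ℝ)
    (H' : Matrix (Fin r) (Fin r) ℝ) (hu : IsUnit (H τ))
    (hd : ∀ α β : Fin r, HasDerivAt (fun s => H s α β) (H' α β) τ) :
    HasDerivAt (fun s => (H s)⁻¹) (-((H τ)⁻¹ * H' * (H τ)⁻¹)) τ := by
  have hpi : HasDerivAt (fun s => (fun α β => H s α β)) (fun α β => H' α β) τ := by
    rw [hasDerivAt_pi]
    intro α
    rw [hasDerivAt_pi]
    intro β
    exact hd α β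
  have hHmat : HasDerivAt (fun s => H s) H' τ := by
    have h2 := (LinearMap.toContinuousLinearMap
      ((Matrix.ofLinearEquiv ℝ :
        (Fin r → Fin r → ℝ) ≃ₗ[ℝ] Matrix (Fin r) (Fin r) ℝ)).toLinearMap).hasFDerivAt.comp_hasDerivAt
      τ hpi
    exact h2
  have hinv := (hasFDerivAt_ringInverse (𝕜 := ℝ) hu.unit)
  rw [hu.unit_spec] at hinv
  have hcomp : HasDerivAt (fun s => Ring.inverse (H s))
      ((-((ContinuousLinearMap.mulLeftRight ℝ (Matrix (Fin r) (Fin r) ℝ)) ↑hu.unit⁻¹)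
        ↑hu.unit⁻¹) H') τ := hinv.comp_hasDerivAt τ hHmat
  have hfun : (fun s => Ring.inverse (H s)) = fun s => (H s)⁻¹ := by
    funext s; rw [Matrix.nonsing_inv_eq_ringInverse]
  rw [hfun] at hcomp
  convert hcomp using 1
  have hco : (↑hu.unit⁻¹ : Matrix (Fin r) (Fin r) ℝ) = (H τ)⁻¹ := by
    rw [Matrix.coe_units_inv, hu.unit_spec]
  simp [hco, ContinuousLinearMap.mulLeftRight_apply]

lemma stmt16_entry_deriv {r : ℕ} (F : ℝ → Matrix (Fin r) (Fin r) ℝ) (τ : ℝ)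
    (F' : Matrix (Fin r) (Fin r) ℝ) (h : HasDerivAt F F' τ) (α β : Fin r) :
    HasDerivAt (fun s => F s α β) (F' α β) τ := by
  have h2 := (LinearMap.toContinuousLinearMap
    ({ toFun := fun M : Matrix (Fin r) (Fin r) ℝ => M α β,
       map_add' := fun _ _ => rfl,
       map_smul' := fun _ _ => rfl } : Matrix (Fin r) (Fin r) ℝ →ₗ[ℝ] ℝ)).hasFDerivAt.comp_hasDerivAt
    τ h
  exact h2

/-- basic estimates for the torus-bundle backwards Ricci flow. -/
theorem stmt16 (r m : ℕ) (n : Fin m → ℕ) (p : Fin m → ℝ) (q : Fin r → Fin m → ℤ)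
    (hn : ∀ i, 0 < n i) (hp : ∀ i, 0 < p i)
    (T : ℝ) (hT : 0 < T)
    (H : ℝ → Matrix (Fin r) (Fin r) ℝ) (b : ℝ → Fin m → ℝ)
    (hHsymm : ∀ τ ∈ Set.Ico (0 : ℝ) T, (H τ).IsSymm)
    (hHpd : ∀ τ ∈ Set.Ico (0 : ℝ) T, (H τ).PosDef)
    (hbpos : ∀ τ ∈ Set.Ico (0 : ℝ) T, ∀ i, 0 < b τ i)
    (hH : ∀ τ ∈ Set.Ico (0 : ℝ) T, ∀ α β : Fin r,
      HasDerivAt (fun s => H s α β)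
        (∑ α' : Fin r, ∑ β' : Fin r, ∑ i : Fin m,
          (n i : ℝ) * (q α' i : ℝ) * (q β' i : ℝ) * H τ α α' * H τ β β' / (b τ i) ^ 2) τ)
    (hb : ∀ τ ∈ Set.Ico (0 : ℝ) T, ∀ i : Fin m,
      HasDerivAt (fun s => b s i)
        (2 * p i -
          (∑ α' : Fin r, ∑ β' : Fin r, (q α' i : ℝ) * (q β' i : ℝ) * H τ α' β') / b τ i) τ) :
    (∀ τ ∈ Set.Ico (0 : ℝ) T, ∀ i, b τ i ≤ 2 * p i * τ + b 0 i) ∧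
    (∀ τ ∈ Set.Ico (0 : ℝ) T, ∀ α : Fin r, (H τ)⁻¹ α α ≤ (H 0)⁻¹ α α) ∧
    (∃ c > (0 : ℝ), ∀ τ ∈ Set.Ico (0 : ℝ) T, ∀ x : Fin r → ℝ,
      c * (∑ α, x α ^ 2) ≤ x ⬝ᵥ (H τ).mulVec x) := by
  have hsym : ∀ τ ∈ Set.Ico (0:ℝ) T, ∀ i j, H τ i j = H τ j i :=
    fun τ hτ i j => (hHsymm τ hτ).apply j i
  -- Part (a)
  have parta : ∀ τ ∈ Set.Ico (0:ℝ) T, ∀ i, b τ i ≤ 2 * p i * τ + b 0 i := by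
    intro τ hτ i
    have key := stmt16_antitone (fun s => b s i - 2 * p i * s)
      (fun s => -((∑ α' : Fin r, ∑ β' : Fin r, (q α' i : ℝ) * (q β' i : ℝ) * H s α' β') / b s i))
      (fun s hs => by
        have h1 := (hb s hs i).sub ((hasDerivAt_id s).const_mul (2 * p i))
        exact h1.congr_deriv (by ring))
      (fun s hs => by
        have hQ : 0 ≤ ∑ α' : Fin r, ∑ β' : Fin r, (q α' i : ℝ) * (q β' i : ℝ) * H s α' β' := by
          have h0 := (hHpd s hs).posSemidef.dotProduct_mulVec_nonneg (fun α => (q α i : ℝ))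
          have hst : star (fun α => (q α i : ℝ)) = fun α => (q α i : ℝ) := by
            funext a; simp
          rw [hst] at h0
          have heq : (fun α => (q α i : ℝ)) ⬝ᵥ H s *ᵥ (fun α => (q α i : ℝ))
              = ∑ α' : Fin r, ∑ β' : Fin r, (q α' i : ℝ) * (q β' i : ℝ) * H s α' β' := by
            simp only [dotProduct, Matrix.mulVec, Finset.mul_sum]
            exact Finset.sum_congr rfl fun a _ => Finset.sum_congr rfl fun c _ => by ring
          rw [heq] at h0
          exact h0
        have hbp := hbpos s hs i
        have := div_nonneg hQ hbp.le
        linarith)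
      hτ
    linarith [key]
  -- the matrix A
  set A : ℝ → Matrix (Fin r) (Fin r) ℝ :=
    fun s => Matrix.of fun γ δ => ∑ i, (n i : ℝ) * (q γ i : ℝ) * (q δ i : ℝ) / b s i ^ 2
    with hA
  have hmulE : ∀ s ∈ Set.Ico (0:ℝ) T, ∀ α β : Fin r,
      (H s * A s * H s) α β = ∑ α' : Fin r, ∑ β' : Fin r, ∑ i : Fin m,
        (n i : ℝ) * (q α' i : ℝ) * (q β' i : ℝ) * H s α α' * H s β β' / (b s i) ^ 2 := by
    intro s hs α β
    have swap : ∀ (F : Fin m → Fin r → ℝ), ∑ y, ∑ x, F y x = ∑ x, ∑ y, F y x :=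
      fun F => Finset.sum_comm
    simp only [hA, Matrix.mul_apply, Matrix.of_apply, Finset.sum_mul, Finset.mul_sum]
    rw [Finset.sum_comm]
    refine Finset.sum_congr rfl fun γ _ => ?_
    refine Finset.sum_congr rfl fun δ _ => ?_
    refine Finset.sum_congr rfl fun i _ => ?_
    rw [hsym s hs δ β]
    ring
  have hderivInv : ∀ α : Fin r, ∀ s ∈ Set.Ico (0:ℝ) T,
      HasDerivAt (fun t => (H t)⁻¹ α α) (-(A s α α)) s := by
    intro α s hs
    have hdet : IsUnit (H s).det := isUnit_iff_ne_zero.2 (hHpd s hs).det_pos.ne'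
    have hu : IsUnit (H s) := (Matrix.isUnit_iff_isUnit_det _).2 hdet
    have hd : ∀ γ δ : Fin r, HasDerivAt (fun t => H t γ δ) ((H s * A s * H s) γ δ) s := by
      intro γ δ
      rw [hmulE s hs γ δ]
      exact hH s hs γ δ
    have hmatinv := stmt16_inv_deriv H s (H s * A s * H s) hu hd
    have hval : -((H s)⁻¹ * (H s * A s * H s) * (H s)⁻¹) = -(A s) := by
      have e1 : (H s)⁻¹ * (H s * A s * H s) * (H s)⁻¹
          = ((H s)⁻¹ * H s) * A s * (H s * (H s)⁻¹) := by
        simp only [Matrix.mul_assoc]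
      rw [e1, Matrix.nonsing_inv_mul _ hdet, Matrix.mul_nonsing_inv _ hdet,
        Matrix.one_mul, Matrix.mul_one]
    rw [hval] at hmatinv
    have h2 := stmt16_entry_deriv _ s _ hmatinv α α
    simpa using h2
  -- Part (b)
  have partb : ∀ τ ∈ Set.Ico (0:ℝ) T, ∀ α : Fin r, (H τ)⁻¹ α α ≤ (H 0)⁻¹ α α := by
    intro τ hτ α
    refine stmt16_antitone (fun t => (H t)⁻¹ α α) (fun s => -(A s α α))
      (fun s hs => hderivInv α s hs)
      (fun s hs => by
        have hnn : 0 ≤ A s α α := by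
          simp only [hA, Matrix.of_apply]
          refine Finset.sum_nonneg fun i _ => ?_
          have hb2 := hbpos s hs i
          have hqn : 0 ≤ (n i : ℝ) * (q α i : ℝ) * (q α i : ℝ) := by
            have : 0 ≤ (n i : ℝ) := by positivity
            nlinarith [sq_nonneg ((q α i : ℝ))]
          exact div_nonneg hqn (by positivity)
        show -(A s α α) ≤ 0
        linarith) hτ
  refine ⟨parta, partb, ?_⟩
  -- Part (c)
  have h0mem : (0:ℝ) ∈ Set.Ico (0:ℝ) T := ⟨le_refl _, hT⟩
  set K := ∑ α : Fin r, (H 0)⁻¹ α α with hK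
  have hKnn : 0 ≤ K :=
    Finset.sum_nonneg fun α _ => stmt16_psd_diag_nonneg ((hHpd 0 h0mem).inv).posSemidef α
  refine ⟨(K + 1)⁻¹, by positivity, ?_⟩
  intro τ hτ x
  set S := ∑ α, x α ^ 2 with hSdef
  have hpd := hHpd τ hτ
  have hdet : IsUnit (H τ).det := isUnit_iff_ne_zero.2 hpd.det_pos.ne'
  have hMpsd : ((H τ)⁻¹).PosSemidef := (hpd.inv).posSemidef
  have hMsymm : ∀ i j, (H τ)⁻¹ i j = (H τ)⁻¹ j i := by
    intro i j
    have h1 : ((H τ)⁻¹)ᵀ = (H τ)⁻¹ := by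
      rw [Matrix.transpose_nonsing_inv, (hHsymm τ hτ)]
    exact (Matrix.IsSymm.apply h1 j i)
  have hsymH : ∀ i j, H τ i j = H τ j i := hsym τ hτ
  have hHM : (H τ) *ᵥ ((H τ)⁻¹ *ᵥ x) = x := by
    rw [Matrix.mulVec_mulVec, Matrix.mul_nonsing_inv _ hdet, Matrix.one_mulVec]
  have hcs := stmt16_cs_psd (H τ) hsymH hpd.posSemidef x ((H τ)⁻¹ *ᵥ x)
  rw [hHM] at hcs
  rw [dotProduct_comm ((H τ)⁻¹ *ᵥ x) x] at hcs
  have htr := stmt16_quad_le_trace ((H τ)⁻¹) hMsymm hMpsd x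
  have hKb : ∑ α, (H τ)⁻¹ α α ≤ K := Finset.sum_le_sum fun α _ => partb τ hτ α
  have hSnn : 0 ≤ S := Finset.sum_nonneg fun α _ => sq_nonneg _
  have hMx : x ⬝ᵥ ((H τ)⁻¹ *ᵥ x) ≤ K * S :=
    le_trans htr (mul_le_mul_of_nonneg_right hKb hSnn)
  have hxx : x ⬝ᵥ x = S := by
    simp only [dotProduct, hSdef, sq]
  rw [hxx] at hcs
  have hq : 0 ≤ x ⬝ᵥ (H τ) *ᵥ x := by
    have h0 := hpd.posSemidef.dotProduct_mulVec_nonneg x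
    have hst : star x = x := by funext a; simp
    rwa [hst] at h0
  have hMxnn : 0 ≤ x ⬝ᵥ ((H τ)⁻¹ *ᵥ x) := by
    have h0 := hMpsd.dotProduct_mulVec_nonneg x
    have hst : star x = x := by funext a; simp
    rwa [hst] at h0
  show (K + 1)⁻¹ * S ≤ x ⬝ᵥ (H τ) *ᵥ x
  rcases eq_or_lt_of_le hSnn with h | h
  · rw [← h, mul_zero]
    exact hq
  · have hfin : S ^ 2 ≤ (x ⬝ᵥ (H τ) *ᵥ x) * (K * S) :=
      le_trans hcs (mul_le_mul_of_nonneg_left hMx hq)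
    have hcnn : (0:ℝ) ≤ (K + 1)⁻¹ := by positivity
    have hc1 : (K + 1) * (K + 1)⁻¹ = 1 := mul_inv_cancel₀ (by positivity)
    have hS2 : S ≤ (x ⬝ᵥ (H τ) *ᵥ x) * K := by nlinarith [hfin, h]
    have hS3 : (K + 1)⁻¹ * S ≤ (K + 1)⁻¹ * ((x ⬝ᵥ (H τ) *ᵥ x) * K) :=
      mul_le_mul_of_nonneg_left hS2 hcnn
    nlinarith [hS3, mul_nonneg hq hcnn, hc1, hq]
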